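/- Let h : ℝ → ℝ ∪ {+∞} be proper, convex, and lower semicontinuous, let ν > 0 and q ∈ ℝ, and let a ≤ b. Then F(v) := (1/(2ν))(v − q)² + h(v) has a unique global minimizer v* over ℝ, and the clipped point min(max(v*, a), b) is a global minimizer of F over the interval [a, b]. -/

import Mathlib

set_option maxHeartbeats 1000000

lemma lsc_exists_min_Icc (f : ℝ → EReal) (hf : LowerSemicontinuous f) (lo hi : ℝ)
    (hlohi : lo ≤ hi) :
    ∃ m ∈ Set.Icc lo hi, ∀ v ∈ Set.Icc lo hi, f m ≤ f v := by
  set K := Set.Icc lo hi with hK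
  have hKc : IsCompact K := isCompact_Icc
  set S : EReal := sInf (f '' K) with hS
  by_cases hStop : S = ⊤
  · refine ⟨lo, Set.left_mem_Icc.2 hlohi, fun v hv => ?_⟩
    have : (⊤ : EReal) ≤ f v := hStop ▸ sInf_le (Set.mem_image_of_mem f hv)
    exact le_trans le_top this
  · obtain ⟨u, hu_anti, hu_mem, hu_tend⟩ :=
      exists_seq_strictAnti_tendsto' (lt_top_iff_ne_top.2 hStop)
    have hxn : ∀ n, ∃ x ∈ K, f x < u n := by
      intro n
      obtain ⟨y, ⟨x, hxK, rfl⟩, hy⟩ := sInf_lt_iff.1 (hu_mem n).1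
      exact ⟨x, hxK, hy⟩
    choose x hxK hxlt using hxn
    obtain ⟨m, hmK, φ, hφ, hconv⟩ := hKc.tendsto_subseq hxK
    refine ⟨m, hmK, fun v hv => ?_⟩
    refine le_trans ?_ (sInf_le (Set.mem_image_of_mem f hv))
    by_contra hlt
    push_neg at hlt
    obtain ⟨y, hy1, hy2⟩ := exists_between hlt
    have h1 : ∀ᶠ n in Filter.atTop, y < f (x (φ n)) :=
      hconv.eventually (hf m y hy2)
    have h2 : ∀ᶠ n in Filter.atTop, u (φ n) < y :=
      (tendsto_order.1 (hu_tend.comp hφ.tendsto_atTop)).2 y hy1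
    obtain ⟨n, hn1, hn2⟩ := (h1.and h2).exists
    exact absurd (lt_trans (hxlt (φ n)) hn2) (not_lt.2 hn1.le)
lemma aux_conv (h : ℝ → EReal) (hnobot : ∀ v, h v ≠ ⊥)
    (hconv : ∀ a b t : ℝ, 0 ≤ t → t ≤ 1 →
      h (t * a + (1 - t) * b) ≤ (t : EReal) * h a + ((1 - t : ℝ) : EReal) * h b)
    (x y t : ℝ) (ht0 : 0 ≤ t) (ht1 : t ≤ 1) (hx : h x ≠ ⊤) (hy : h y ≠ ⊤) :
    h (t * x + (1 - t) * y) ≠ ⊤ ∧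
      (h (t * x + (1 - t) * y)).toReal ≤ t * (h x).toReal + (1 - t) * (h y).toReal := by
  have hx' : h x = ((h x).toReal : EReal) := (EReal.coe_toReal hx (hnobot x)).symm
  have hy' : h y = ((h y).toReal : EReal) := (EReal.coe_toReal hy (hnobot y)).symm
  have key := hconv x y t ht0 ht1
  rw [hx', hy'] at key
  rw [← EReal.coe_mul, ← EReal.coe_mul, ← EReal.coe_add] at key
  have hmidtop : h (t * x + (1 - t) * y) ≠ ⊤ :=
    ne_top_of_le_ne_top (EReal.coe_ne_top _) key
  refine ⟨hmidtop, ?_⟩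
  have hmid' : h (t * x + (1 - t) * y) = ((h (t * x + (1 - t) * y)).toReal : EReal) :=
    (EReal.coe_toReal hmidtop (hnobot _)).symm
  rw [hmid'] at key
  exact_mod_cast key


lemma minorant (h : ℝ → EReal) (hproper : ∃ v, h v ≠ ⊤) (hnobot : ∀ v, h v ≠ ⊥)
    (hconv : ∀ a b t : ℝ, 0 ≤ t → t ≤ 1 →
      h (t * a + (1 - t) * b) ≤ (t : EReal) * h a + ((1 - t : ℝ) : EReal) * h b) :
    ∃ A B : ℝ, 0 ≤ B ∧ ∀ v, ((A - B * |v| : ℝ) : EReal) ≤ h v := by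
  obtain ⟨v0, hv0⟩ := hproper
  by_cases hdeg : ∀ v, h v ≠ ⊤ → v = v0
  · refine ⟨(h v0).toReal, 0, le_refl 0, fun v => ?_⟩
    by_cases hv : h v = ⊤
    · rw [hv]; exact le_top
    · have hveq : v = v0 := hdeg v hv
      subst hveq
      rw [show ((h v).toReal - 0 * |v| : ℝ) = (h v).toReal by ring]
      exact le_of_eq (EReal.coe_toReal hv (hnobot v))
  · push_neg at hdeg
    obtain ⟨v1, hv1top, hv1ne⟩ := hdeg
    obtain ⟨x, z, hxz, hxtop, hztop⟩ :
        ∃ x z : ℝ, x < z ∧ h x ≠ ⊤ ∧ h z ≠ ⊤ := by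
      rcases lt_or_gt_of_ne hv1ne with hlt | hlt
      · exact ⟨v1, v0, hlt, hv1top, hv0⟩
      · exact ⟨v0, v1, hlt, hv0, hv1top⟩
    have Hxe : (((h x).toReal : ℝ) : EReal) = h x := EReal.coe_toReal hxtop (hnobot x)
    have Hze : (((h z).toReal : ℝ) : EReal) = h z := EReal.coe_toReal hztop (hnobot z)
    set Hx := (h x).toReal
    set Hz := (h z).toReal
    have hzx : (0:ℝ) < z - x := by linarith
    -- midpoint
    have hmid := aux_conv h hnobot hconv x z (1/2) (by norm_num) (by norm_num) hxtop hztop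
    set m := (x + z) / 2 with hmdef
    rw [show (1/2 : ℝ) * x + (1 - 1/2) * z = m by rw [hmdef]; ring] at hmid
    obtain ⟨hmtop, hmle⟩ := hmid
    set Hm := (h m).toReal
    set s : ℝ := (Hz - Hx) / (z - x) with hsdef
    have hs : s * (z - x) = Hz - Hx := by rw [hsdef]; field_simp
    set A : ℝ := min (Hx - s*x) (min (Hz - s*z) (2*Hm - max Hx Hz)) with hAdef
    have hA1 : A ≤ Hx - s * x := min_le_left _ _
    have hA2 : A ≤ Hz - s * z := le_trans (min_le_right _ _) (min_le_left _ _)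
    have hA3 : A ≤ 2*Hm - max Hx Hz := le_trans (min_le_right _ _) (min_le_right _ _)
    refine ⟨A, |s|, abs_nonneg s, fun v => ?_⟩
    by_cases hvtop : h v = ⊤
    · rw [hvtop]; exact le_top
    have Hve : (((h v).toReal : ℝ) : EReal) = h v := EReal.coe_toReal hvtop (hnobot v)
    set Hv := (h v).toReal
    rw [← Hve, EReal.coe_le_coe_iff]
    have hsv : -(|s| * |v|) ≤ s * v := by rw [← abs_mul]; exact neg_abs_le _
    rcases lt_trichotomy v x with hvx | hvx | hvx
    · -- v < x : x = t*v + (1-t)*z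
      have hzv : (0:ℝ) < z - v := by linarith
      set t := (z - x) / (z - v) with htdef
      have ht0 : 0 ≤ t := by positivity
      have ht1 : t ≤ 1 := by rw [htdef, div_le_one hzv]; linarith
      have ht' : t * (z - v) = z - x := by rw [htdef]; field_simp
      have hpt : t * v + (1 - t) * z = x := by
        have e : t * v + (1 - t) * z = z - t * (z - v) := by ring
        rw [e, ht']; ring
      have key := (aux_conv h hnobot hconv v z t ht0 ht1 hvtop hztop).2
      rw [hpt] at key
      have key2 : 0 ≤ (t * Hv + (1 - t) * Hz - Hx) * (z - v) :=
        mul_nonneg (by linarith) hzv.le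
      have key3 : 0 ≤ (z - x) * Hv + (x - v) * Hz - (z - v) * Hx := by
        have e2 : (t * Hv + (1 - t) * Hz - Hx) * (z - v)
            = (z - x) * Hv + (x - v) * Hz - (z - v) * Hx := by
          linear_combination (Hv - Hz) * ht'
        linarith [e2 ▸ key2]
      have target2 : Hx + s * (v - x) ≤ Hv := by
        have e3 : (Hv - (Hx + s * (v - x))) * (z - x)
            = (z - x) * Hv + (x - v) * Hz - (z - v) * Hx := by
          linear_combination (x - v) * hs
        nlinarith [key3, hzx, e3]
      linarith [hA1, hsv, target2]
    · subst hvx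
      linarith [hA1, hsv]
    · rcases le_or_gt v z with hvz | hvz
      · -- x < v ≤ z : reflection through m
        set w := x + z - v with hwdef
        set t' := (v - x) / (z - x) with ht'def
        have ht'0 : 0 ≤ t' := div_nonneg (by linarith) hzx.le
        have ht'1 : t' ≤ 1 := by rw [ht'def, div_le_one hzx]; linarith
        have hptw : t' * x + (1 - t') * z = w := by
          rw [ht'def, hwdef]; field_simp; ring
        have hw := aux_conv h hnobot hconv x z t' ht'0 ht'1 hxtop hztop
        rw [hptw] at hw
        obtain ⟨hwtop, hwle⟩ := hw
        set Hw := (h w).toReal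
        have hwmax : Hw ≤ max Hx Hz := by
          rcases le_total Hx Hz with hc | hc
          · rw [max_eq_right hc]; nlinarith [hwle, ht'0, ht'1]
          · rw [max_eq_left hc]; nlinarith [hwle, ht'0, ht'1]
        have hm2 := (aux_conv h hnobot hconv v w (1/2) (by norm_num) (by norm_num) hvtop hwtop).2
        rw [show (1/2 : ℝ) * v + (1 - 1/2) * w = m by rw [hwdef, hmdef]; ring] at hm2
        have habs : 0 ≤ |s| * |v| := mul_nonneg (abs_nonneg _) (abs_nonneg _)
        have hmax3 : max Hx Hz ≤ max Hx Hz := le_refl _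
        linarith [hm2, hA3, hwmax, habs]
      · -- z < v : z = t*v + (1-t)*x
        have hvx' : (0:ℝ) < v - x := by linarith
        set t := (z - x) / (v - x) with htdef
        have ht0 : 0 ≤ t := by positivity
        have ht1 : t ≤ 1 := by rw [htdef, div_le_one hvx']; linarith
        have ht' : t * (v - x) = z - x := by rw [htdef]; field_simp
        have hpt : t * v + (1 - t) * x = z := by
          have e : t * v + (1 - t) * x = x + t * (v - x) := by ring
          rw [e, ht']; ring
        have key := (aux_conv h hnobot hconv v x t ht0 ht1 hvtop hxtop).2
        rw [hpt] at key
        have key2 : 0 ≤ (t * Hv + (1 - t) * Hx - Hz) * (v - x) :=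
          mul_nonneg (by linarith) hvx'.le
        have key3 : 0 ≤ (z - x) * Hv + (v - z) * Hx - (v - x) * Hz := by
          have e2 : (t * Hv + (1 - t) * Hx - Hz) * (v - x)
              = (z - x) * Hv + (v - z) * Hx - (v - x) * Hz := by
            linear_combination (Hv - Hx) * ht'
          linarith [e2 ▸ key2]
        have target2 : Hz + s * (v - z) ≤ Hv := by
          have e3 : (Hv - (Hz + s * (v - z))) * (z - x)
              = (z - x) * Hv + (v - z) * Hx - (v - x) * Hz := by
            linear_combination (z - v) * hs
          nlinarith [key3, hzx, e3]
        linarith [hA2, hsv, target2]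
-- main theorem part, to be appended after lemmas
/-- The interval-constrained proximal problem for convex h is solved by clipping
the unconstrained proximal point onto the interval. -/
theorem clipped_prox_solves_constrained (h : ℝ → EReal)
    (hproper : ∃ v, h v ≠ ⊤) (hnobot : ∀ v, h v ≠ ⊥)
    (hlsc : LowerSemicontinuous h)
    (hconv : ∀ a b t : ℝ, 0 ≤ t → t ≤ 1 →
      h (t * a + (1 - t) * b) ≤ (t : EReal) * h a + ((1 - t : ℝ) : EReal) * h b)
    (ν q : ℝ) (hν : 0 < ν) (a b : ℝ) (hab : a ≤ b) :
    ∃ vstar : ℝ,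
      (∀ v, (((1 / (2 * ν)) * (vstar - q) ^ 2 : ℝ) : EReal) + h vstar
          ≤ (((1 / (2 * ν)) * (v - q) ^ 2 : ℝ) : EReal) + h v) ∧
      (∀ u, (∀ v, (((1 / (2 * ν)) * (u - q) ^ 2 : ℝ) : EReal) + h u
          ≤ (((1 / (2 * ν)) * (v - q) ^ 2 : ℝ) : EReal) + h v) → u = vstar) ∧
      (∀ v ∈ Set.Icc a b,
        (((1 / (2 * ν)) * (min (max vstar a) b - q) ^ 2 : ℝ) : EReal)
            + h (min (max vstar a) b)
          ≤ (((1 / (2 * ν)) * (v - q) ^ 2 : ℝ) : EReal) + h v) := by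
  have hc : (0:ℝ) < 1 / (2 * ν) := by positivity
  set c : ℝ := 1 / (2 * ν) with hcdef
  set F : ℝ → EReal := fun v => ((c * (v - q) ^ 2 : ℝ) : EReal) + h v with hFdef
  set G : ℝ → ℝ := fun v => c * (v - q) ^ 2 + (h v).toReal with hGdef
  -- basic facts
  have hFG : ∀ v, h v ≠ ⊤ → F v = ((G v : ℝ) : EReal) := by
    intro v hv
    have e : ((G v : ℝ) : EReal)
        = ((c * (v - q) ^ 2 : ℝ) : EReal) + (((h v).toReal : ℝ) : EReal) := EReal.coe_add _ _
    rw [EReal.coe_toReal hv (hnobot v)] at e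
    exact e.symm
  have hFtop : ∀ v, h v = ⊤ → F v = ⊤ := by
    intro v hv
    rw [hFdef]; simp only [hv]; exact EReal.coe_add_top _
  -- convexity with strong term
  have hGconv : ∀ x y t : ℝ, 0 ≤ t → t ≤ 1 → h x ≠ ⊤ → h y ≠ ⊤ →
      h (t * x + (1 - t) * y) ≠ ⊤ ∧
        G (t * x + (1 - t) * y) ≤ t * G x + (1 - t) * G y
          - c * t * (1 - t) * (x - y) ^ 2 := by
    intro x y t ht0 ht1 hx hy
    obtain ⟨htop, hle⟩ := aux_conv h hnobot hconv x y t ht0 ht1 hx hy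
    refine ⟨htop, ?_⟩
    have hqd : c * (t * x + (1 - t) * y - q) ^ 2
        = t * (c * (x - q) ^ 2) + (1 - t) * (c * (y - q) ^ 2)
          - c * t * (1 - t) * (x - y) ^ 2 := by ring
    simp only [hGdef]
    linarith [hle, hqd.le]
  -- lower semicontinuity of F
  have hFlsc : LowerSemicontinuous F := by
    apply LowerSemicontinuous.add'
    · exact (continuous_coe_real_ereal.comp (by continuity)).lowerSemicontinuous
    · exact hlsc
    · intro x
      exact EReal.continuousAt_add (Or.inl (EReal.coe_ne_top _)) (Or.inl (EReal.coe_ne_bot _))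
  -- coercivity
  obtain ⟨A, B, hB, hAB⟩ := minorant h hproper hnobot hconv
  obtain ⟨v0, hv0⟩ := hproper
  set M : ℝ := G v0 with hMdef
  set R : ℝ := max (max 1 |v0|) ((B + 2*c*|q| + |M| + |A| + c)/c) with hRdef
  have hR1 : 1 ≤ R := le_trans (le_max_left _ _) (le_max_left _ _)
  have hRv0 : |v0| ≤ R := le_trans (le_max_right _ _) (le_max_left _ _)
  have hRc : B + 2*c*|q| + |M| + |A| + c ≤ c * R := by
    have := le_max_right (max 1 |v0|) ((B + 2*c*|q| + |M| + |A| + c)/c)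
    rw [div_le_iff₀ hc] at this
    calc B + 2*c*|q| + |M| + |A| + c ≤ R * c := this
    _ = c * R := by ring
  have hout : ∀ v, R < |v| → F v0 ≤ F v := by
    intro v hv
    have h1 : ((A - B * |v| : ℝ) : EReal) ≤ h v := hAB v
    have h2 : M ≤ c * (v - q) ^ 2 + (A - B * |v|) := by
      have e1 : v * q ≤ |v| * |q| := by rw [← abs_mul]; exact le_abs_self _
      have e2 : v ^ 2 = |v| ^ 2 := (sq_abs v).symm
      have e3 : 1 ≤ |v| := le_trans hR1 hv.le
      have e4 : c * R ≤ c * |v| := by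
        exact mul_le_mul_of_nonneg_left hv.le hc.le
      have e5 : M ≤ |M| := le_abs_self M
      have e6 : -|A| ≤ A := neg_abs_le A
      have e7 : (0:ℝ) ≤ c * q ^ 2 := by positivity
      have p1 : 2 * c * (v * q) ≤ 2 * c * (|v| * |q|) :=
        mul_le_mul_of_nonneg_left e1 (by positivity)
      have p2 : c * R * |v| ≤ c * |v| * |v| := by
        have := mul_le_mul_of_nonneg_right e4 (abs_nonneg v)
        linarith [this]
      have p3 : (B + 2 * c * |q| + |M| + |A| + c) * |v| ≤ c * R * |v| :=
        mul_le_mul_of_nonneg_right hRc (abs_nonneg v)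
      have p4 : (|M| + |A| + c) * 1 ≤ (|M| + |A| + c) * |v| :=
        mul_le_mul_of_nonneg_left e3 (by positivity)
      nlinarith [p1, p2, p3, p4, e2, e5, e6, e7, abs_nonneg q, abs_nonneg v, hc]
    calc F v0 = ((M : ℝ) : EReal) := hFG v0 hv0
    _ ≤ ((c * (v - q) ^ 2 + (A - B * |v|) : ℝ) : EReal) := EReal.coe_le_coe_iff.2 h2
    _ = ((c * (v - q) ^ 2 : ℝ) : EReal) + ((A - B * |v| : ℝ) : EReal) := EReal.coe_add _ _
    _ ≤ ((c * (v - q) ^ 2 : ℝ) : EReal) + h v := add_le_add_right h1 _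
    _ = F v := rfl
  -- minimize over [-R, R]
  obtain ⟨vstar, hvK, hvmin⟩ := lsc_exists_min_Icc F hFlsc (-R) R (by linarith)
  have hv0K : v0 ∈ Set.Icc (-R) R := by
    rcases abs_le.1 hRv0 with ⟨h1', h2'⟩; exact ⟨h1', h2'⟩
  have hglobal : ∀ v, F vstar ≤ F v := by
    intro v
    by_cases hvK' : v ∈ Set.Icc (-R) R
    · exact hvmin v hvK'
    · simp only [Set.mem_Icc, not_and_or, not_le] at hvK'
      have hRv : R < |v| := by
        rcases hvK' with h' | h'
        · rw [abs_of_neg (by linarith)]; linarith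
        · rw [abs_of_pos (by linarith)]; linarith
      exact le_trans (hvmin v0 hv0K) (hout v hRv)
  have hstar_fin : h vstar ≠ ⊤ := by
    intro htop
    have h1 : F vstar ≤ F v0 := hglobal v0
    rw [hFtop vstar htop, hFG v0 hv0] at h1
    exact (EReal.coe_ne_top _) (top_le_iff.1 h1)
  -- helper: the coe order transfer
  have hFle : ∀ u w, h u ≠ ⊤ → h w ≠ ⊤ → (F u ≤ F w ↔ G u ≤ G w) := by
    intro u w hu hw
    rw [hFG u hu, hFG w hw, EReal.coe_le_coe_iff]
  clear_value R M G
  refine ⟨vstar, hglobal, ?_, ?_⟩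
  · -- uniqueness
    intro u hu
    have hglobal_u : ∀ v, F u ≤ F v := hu
    have hu_fin : h u ≠ ⊤ := by
      intro htop
      have h1 : F u ≤ F v0 := hglobal_u v0
      rw [hFtop u htop, hFG v0 hv0] at h1
      exact (EReal.coe_ne_top _) (top_le_iff.1 h1)
    have hGu : G u ≤ G vstar := (hFle u vstar hu_fin hstar_fin).1 (hglobal_u vstar)
    have hGv : G vstar ≤ G u := (hFle vstar u hstar_fin hu_fin).1 (hglobal u)
    obtain ⟨hμtop, hμle⟩ := hGconv u vstar (1/2) (by norm_num) (by norm_num) hu_fin hstar_fin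
    have hμmin : G vstar ≤ G ((1/2) * u + (1 - 1/2) * vstar) :=
      (hFle vstar _ hstar_fin hμtop).1 (hglobal _)
    have h4 : c * (u - vstar) ^ 2 ≤ 0 := by linarith [hμle, hμmin, hGu, hGv]
    have h5 : (u - vstar) ^ 2 ≤ 0 := by nlinarith [h4, hc, sq_nonneg (u - vstar)]
    have h6 : u - vstar = 0 := by
      have := le_antisymm h5 (sq_nonneg _)
      exact sq_eq_zero_iff.mp (by rw [sq]; rw [sq] at this; exact this)
    linarith
  · -- clipping
    intro v hv
    obtain ⟨hav, hvb⟩ := hv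
    -- helper: if w strictly between vstar and v then F w ≤ F v
    have hbetween : ∀ w v' t : ℝ, 0 < t → t < 1 → w = t * vstar + (1 - t) * v' →
        F w ≤ F v' := by
      intro w v' t ht0 ht1 hw
      by_cases hv'top : h v' = ⊤
      · rw [hFtop v' hv'top]; exact le_top
      obtain ⟨hwtop, hwle⟩ := hGconv vstar v' t ht0.le ht1.le hstar_fin hv'top
      rw [← hw] at hwtop hwle
      have hGs : G vstar ≤ G w := (hFle vstar w hstar_fin hwtop).1 (hglobal w)
      have hGwv : G w ≤ G v' := by
        have hterm : 0 ≤ c * t * (1 - t) * (vstar - v') ^ 2 :=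
          mul_nonneg (mul_nonneg (mul_nonneg hc.le ht0.le) (by linarith)) (sq_nonneg _)
        nlinarith [hwle, hGs]
      exact (hFle w v' hwtop hv'top).2 hGwv
    rcases lt_or_ge vstar a with hva | hva
    · have hpa : min (max vstar a) b = a := by
        rw [max_eq_right hva.le, min_eq_left hab]
      rw [hpa]
      rcases eq_or_lt_of_le hav with heq | hlt
      · subst heq; exact le_refl _
      · refine hbetween a v ((v - a)/(v - vstar)) ?_ ?_ ?_
        · apply div_pos <;> linarith
        · rw [div_lt_one (by linarith)]; linarith
        · have hden : v - vstar ≠ 0 := sub_ne_zero.2 (ne_of_gt (by linarith))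
          field_simp [hden]
          ring
    · rcases lt_or_ge b vstar with hvb' | hvb'
      · have hpb : min (max vstar a) b = b := by
          rw [max_eq_left (by linarith), min_eq_right (by linarith)]
        rw [hpb]
        rcases eq_or_lt_of_le hvb with heq | hlt
        · subst heq; exact le_refl _
        · refine hbetween b v ((b - v)/(vstar - v)) ?_ ?_ ?_
          · apply div_pos <;> linarith
          · rw [div_lt_one (by linarith)]; linarith
          · have hden : vstar - v ≠ 0 := sub_ne_zero.2 (ne_of_gt (by linarith))
            field_simp [hden]
            ring
      · have hpv : min (max vstar a) b = vstar := by
          rw [max_eq_left hva, min_eq_left hvb']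
        rw [hpv]
        exact hglobal v
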